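/- (Laplace's method, simplest instance) For a continuous function g on [a,b] attaining a strict maximum at an interior point c with g twice continuously differentiable near c and g''(c) < 0, the integrals I_n = ∫_a^b e^{n g(x)} dx satisfy (1/n) log I_n → g(c) as n → ∞. -/

import Mathlib

/-- Laplace's method, simplest instance: `(1/n) log ∫_a^b e^{n g(x)} dx → g(c)`. -/
theorem laplace_method (a b c : ℝ) (hac : a < c) (hcb : c < b)
    (g : ℝ → ℝ) (hg : ContinuousOn g (Set.Icc a b))
    (hmax : ∀ x ∈ Set.Icc a b, x ≠ c → g x < g c)
    (δ : ℝ) (hδ : 0 < δ)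
    (hC2 : ContDiffOn ℝ 2 g (Metric.ball c δ))
    (hg'' : deriv (deriv g) c < 0) :
    Filter.Tendsto
      (fun n : ℕ => (1 / (n : ℝ)) * Real.log (∫ x in a..b, Real.exp (n * g x)))
      Filter.atTop (nhds (g c)) := by
  have hab : a < b := hac.trans hcb
  have hgle : ∀ x ∈ Set.Icc a b, g x ≤ g c := by
    intro x hx
    rcases eq_or_ne x c with rfl | hne
    · exact le_rfl
    · exact (hmax x hx hne).le
  -- continuity of the integrand
  have hcont : ∀ n : ℕ, ContinuousOn (fun x => Real.exp (n * g x)) (Set.Icc a b) :=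
    fun n => Real.continuous_exp.comp_continuousOn (continuousOn_const.mul hg)
  have hInt : ∀ n : ℕ, IntervalIntegrable (fun x => Real.exp (n * g x))
      MeasureTheory.volume a b := by
    intro n
    apply ContinuousOn.intervalIntegrable
    rw [Set.uIcc_of_le hab.le]
    exact hcont n
  have hIpos : ∀ n : ℕ, 0 < ∫ x in a..b, Real.exp (n * g x) := fun n =>
    intervalIntegral.intervalIntegral_pos_of_pos (hInt n) (fun x => Real.exp_pos _) hab
  -- upper bound
  have hupper : ∀ n : ℕ, (∫ x in a..b, Real.exp (n * g x)) ≤ (b - a) * Real.exp (n * g c) := by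
    intro n
    have : (∫ x in a..b, Real.exp (n * g x)) ≤ ∫ _x in a..b, Real.exp (n * g c) := by
      apply intervalIntegral.integral_mono_on hab.le (hInt n) intervalIntegrable_const
      intro x hx
      exact Real.exp_le_exp.2 (mul_le_mul_of_nonneg_left (hgle x hx) (Nat.cast_nonneg n))
    simpa using this
  apply tendsto_order.2
  constructor
  · -- lower bound side
    intro b' hb'
    set ε : ℝ := g c - b' with hε
    have hεpos : 0 < ε := sub_pos.2 hb'
    -- continuity at c gives a neighborhood where g > g c - ε/2
    have hgc : ContinuousAt g c := hC2.continuousOn.continuousAt (Metric.ball_mem_nhds c hδ)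
    obtain ⟨η, hη, hball⟩ := Metric.continuousAt_iff.1 hgc (ε / 2) (by positivity)
    set r : ℝ := min (η / 2) (min ((c - a) / 2) ((b - c) / 2)) with hr
    have hrpos : 0 < r := by
      apply lt_min (by linarith) (lt_min (by linarith) (by linarith))
    have hra : a ≤ c - r := by
      have : r ≤ (c - a) / 2 := (min_le_right _ _).trans (min_le_left _ _)
      linarith
    have hrb : c + r ≤ b := by
      have : r ≤ (b - c) / 2 := (min_le_right _ _).trans (min_le_right _ _)
      linarith
    have hrη : r < η := by
      have : r ≤ η / 2 := min_le_left _ _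
      linarith
    have hgr : ∀ x ∈ Set.Icc (c - r) (c + r), g c - ε / 2 ≤ g x := by
      intro x hx
      have hd : dist x c < η := by
        rw [Real.dist_eq]
        have : |x - c| ≤ r := abs_le.2 ⟨by linarith [hx.1], by linarith [hx.2]⟩
        linarith
      have := hball hd
      rw [Real.dist_eq] at this
      have := abs_lt.1 this
      linarith [this.1]
    have hsubInt : ∀ n : ℕ, IntervalIntegrable (fun x => Real.exp (n * g x))
        MeasureTheory.volume (c - r) (c + r) := by
      intro n
      apply (hInt n).mono_set
      rw [Set.uIcc_of_le hab.le, Set.uIcc_of_le (show c - r ≤ c + r by linarith)]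
      exact Set.Icc_subset_Icc hra hrb
    have hlow : ∀ n : ℕ, (2 * r) * Real.exp (n * (g c - ε / 2)) ≤
        ∫ x in a..b, Real.exp (n * g x) := by
      intro n
      have h1 : (∫ x in (c - r)..(c + r), Real.exp (n * g x)) ≤
          ∫ x in a..b, Real.exp (n * g x) := by
        apply intervalIntegral.integral_mono_interval hra (by linarith) hrb
        · filter_upwards with x using (Real.exp_pos _).le
        · exact hInt n
      have h2 : (∫ _x in (c - r)..(c + r), Real.exp (n * (g c - ε / 2))) ≤
          ∫ x in (c - r)..(c + r), Real.exp (n * g x) := by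
        apply intervalIntegral.integral_mono_on (by linarith) intervalIntegrable_const
          (hsubInt n)
        intro x hx
        exact Real.exp_le_exp.2 (mul_le_mul_of_nonneg_left (hgr x hx) (Nat.cast_nonneg n))
      have h3 : (∫ _x in (c - r)..(c + r), Real.exp (n * (g c - ε / 2)))
          = (2 * r) * Real.exp (n * (g c - ε / 2)) := by
        simp; ring
      linarith
    -- eventually `log (2r) / n > -ε/2`
    have htend : Filter.Tendsto (fun n : ℕ => Real.log (2 * r) / n) Filter.atTop (nhds 0) :=
      tendsto_const_div_atTop_nhds_zero_nat _
    have hev : ∀ᶠ n : ℕ in Filter.atTop, -(ε / 2) < Real.log (2 * r) / n := by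
      have := htend.eventually (eventually_gt_nhds (show -(ε / 2) < 0 by linarith))
      exact this
    filter_upwards [hev, Filter.eventually_ge_atTop 1] with n hn hn1
    have hnpos : (0 : ℝ) < n := by exact_mod_cast hn1
    have hlog : Real.log ((2 * r) * Real.exp (n * (g c - ε / 2))) ≤
        Real.log (∫ x in a..b, Real.exp (n * g x)) := by
      apply Real.log_le_log (by positivity) (hlow n)
    rw [Real.log_mul (by positivity) (Real.exp_ne_zero _), Real.log_exp] at hlog
    have : (1 / (n : ℝ)) * (Real.log (2 * r) + n * (g c - ε / 2)) ≤
        (1 / (n : ℝ)) * Real.log (∫ x in a..b, Real.exp (n * g x)) := by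
      apply mul_le_mul_of_nonneg_left hlog (by positivity)
    have heq : (1 / (n : ℝ)) * (Real.log (2 * r) + n * (g c - ε / 2)) =
        Real.log (2 * r) / n + (g c - ε / 2) := by
      field_simp
    rw [heq] at this
    calc b' = g c - ε := by rw [hε]; ring
    _ < Real.log (2 * r) / n + (g c - ε / 2) := by linarith
    _ ≤ _ := this
  · -- upper bound side
    intro b' hb'
    have htend : Filter.Tendsto (fun n : ℕ => Real.log (b - a) / n) Filter.atTop (nhds 0) :=
      tendsto_const_div_atTop_nhds_zero_nat _
    have hev : ∀ᶠ n : ℕ in Filter.atTop, Real.log (b - a) / n < b' - g c :=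
      htend.eventually (eventually_lt_nhds (by linarith))
    filter_upwards [hev, Filter.eventually_ge_atTop 1] with n hn hn1
    have hnpos : (0 : ℝ) < n := by exact_mod_cast hn1
    have hlog : Real.log (∫ x in a..b, Real.exp (n * g x)) ≤
        Real.log ((b - a) * Real.exp (n * g c)) :=
      Real.log_le_log (hIpos n) (hupper n)
    rw [Real.log_mul (sub_pos.2 hab).ne' (Real.exp_ne_zero _), Real.log_exp] at hlog
    have : (1 / (n : ℝ)) * Real.log (∫ x in a..b, Real.exp (n * g x)) ≤
        (1 / (n : ℝ)) * (Real.log (b - a) + n * g c) :=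
      mul_le_mul_of_nonneg_left hlog (by positivity)
    have heq : (1 / (n : ℝ)) * (Real.log (b - a) + n * g c) =
        Real.log (b - a) / n + g c := by
      field_simp
    rw [heq] at this
    linarith
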